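/- Anchor supported on rationalizable actions implies CH consistency: let p be an anchor with p_j(R^∞_j) = 1 for every player j, and f any full-support level distribution. Then for every player i and every order n ≥ 0 there exists a level k with C^n_{i,p,f}(θ_{i,k}) ⊆ R^n_i; in fact, for every k ≥ 1, C^k_{i,p,f}(θ_{i,k}) ⊆ R^∞_i ⊆ R^k_i. -/
import Mathlib


open Finset

/-- A probability distribution (as weights) on a finite set. -/
def IsDist {B : Type} [Fintype B] (ν : B → ℝ) : Prop :=
  (∀ b, 0 ≤ ν b) ∧ ∑ b, ν b = 1

/-- `a` is a best reply to the conjecture `ν` (weights on the co-player's actions). -/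
def isBR {A B : Type} [Fintype A] [Fintype B] (u : A → B → ℝ) (ν : B → ℝ) (a : A) : Prop :=
  ∀ a' : A, ∑ b, ν b * u a' b ≤ ∑ b, ν b * u a b

/-- `a` is strictly dominated by some mixed action. -/
def Dominated {A B : Type} [Fintype A] [Fintype B] (u : A → B → ℝ) (a : A) : Prop :=
  ∃ α : A → ℝ, IsDist α ∧ ∀ b : B, (∑ a', α a' * u a' b) > u a b

/-- One step of iterated elimination: best replies (within `S`) to conjectures on `T`. -/
def BRstep {A B : Type} [Fintype A] [Fintype B] (u : A → B → ℝ) (S : Set A) (T : Set B) :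
    Set A :=
  {a | a ∈ S ∧ ∃ ν : B → ℝ, IsDist ν ∧ (∀ b, ν b ≠ 0 → b ∈ T) ∧ isBR u ν a}

/-- `n`-rationalizability in the complete-information game. -/
def Rseq {A B : Type} [Fintype A] [Fintype B] (u1 : A → B → ℝ) (u2 : B → A → ℝ) :
    ℕ → Set A × Set B
  | 0 => (Set.univ, Set.univ)
  | n + 1 =>
    (BRstep u1 (Rseq u1 u2 n).1 (Rseq u1 u2 n).2,
     BRstep u2 (Rseq u1 u2 n).2 (Rseq u1 u2 n).1)

/-- Best replies to conjectures concentrated on `T`. -/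
def Lstep {A B : Type} [Fintype A] [Fintype B] (u : A → B → ℝ) (T : Set B) : Set A :=
  {a | ∃ ν : B → ℝ, IsDist ν ∧ (∀ b, ν b ≠ 0 → b ∈ T) ∧ isBR u ν a}

/-- The classic level-k solution under anchor `(p1, p2)`; `Lk … k` is level-`k` behavior
(meaningful for `k ≥ 1`). -/
def Lk {A B : Type} [Fintype A] [Fintype B] (u1 : A → B → ℝ) (u2 : B → A → ℝ)
    (p1 : A → ℝ) (p2 : B → ℝ) : ℕ → Set A × Set B
  | 0 => (Set.univ, Set.univ)
  | 1 => ({a | isBR u1 p2 a}, {b | isBR u2 p1 b})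
  | k + 2 =>
    (Lstep u1 (Lk u1 u2 p1 p2 (k + 1)).2,
     Lstep u2 (Lk u1 u2 p1 p2 (k + 1)).1)

/-- A Ĝ-conjecture over the co-player's (level-type, action) pairs: a finitely supported
type-marginal together with conditional action distributions. -/
structure GConj (B : Type) [Fintype B] where
  m : ℕ →₀ ℝ
  m_nonneg : ∀ t, 0 ≤ m t
  m_sum : (m.sum fun _ w => w) = 1
  cond : ℕ → B → ℝ
  cond_dist : ∀ t, IsDist (cond t)

/-- Marginal of a Ĝ-conjecture on the co-player's actions. -/
noncomputable def margAct {B : Type} [Fintype B] (μ : GConj B) : B → ℝ :=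
  fun b => μ.m.sum fun t w => w * μ.cond t b

/-- (K1): conditional on the co-player being of type 0 (if deemed possible),
play follows the anchor `q`. -/
def K1 {B : Type} [Fintype B] (q : B → ℝ) (μ : GConj B) : Prop :=
  μ.m 0 ≠ 0 → μ.cond 0 = q

/-- (K2): only co-player types strictly below `k` are deemed possible. -/
def K2 {B : Type} [Fintype B] (k : ℕ) (μ : GConj B) : Prop :=
  ∀ t, μ.m t ≠ 0 → t < k

/-- (KL): only the co-player type `k - 1` is deemed possible. -/
def KL {B : Type} [Fintype B] (k : ℕ) (μ : GConj B) : Prop :=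
  ∀ t, μ.m t ≠ 0 → t = k - 1

/-- Truncation `f^k` of the level distribution `f` at `k`. -/
noncomputable def ftrunc (f : ℕ → ℝ) (k t : ℕ) : ℝ :=
  f t / ∑ t' ∈ Finset.range k, f t'

/-- (KC): the type-marginal equals the truncation of `f` at `k`. -/
def KC {B : Type} [Fintype B] (f : ℕ → ℝ) (k : ℕ) (μ : GConj B) : Prop :=
  ∀ t < k, μ.m t = ftrunc f k t

/-- A full-support level distribution on ℕ. -/
def FullDist (f : ℕ → ℝ) : Prop :=
  (∀ t, 0 < f t) ∧ HasSum f 1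

/-- One step of Δ-rationalizability for one player, under belief restrictions `Δ`
(type-0 pairs always survive, since type-0 payoffs are constant). -/
def Dstep {A B : Type} [Fintype A] [Fintype B] (u : A → B → ℝ)
    (Δ : ℕ → GConj B → Prop) (S : Set (ℕ × A)) (T : Set (ℕ × B)) : Set (ℕ × A) :=
  {x | x ∈ S ∧ (x.1 = 0 ∨ ∃ μ : GConj B, Δ x.1 μ ∧
      (∀ t b, μ.m t ≠ 0 → μ.cond t b ≠ 0 → (t, b) ∈ T) ∧ isBR u (margAct μ) x.2)}

/-- Δ-rationalizability in the derived game with payoff uncertainty. -/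
def DeltaRat {A B : Type} [Fintype A] [Fintype B] (u1 : A → B → ℝ) (u2 : B → A → ℝ)
    (Δ1 : ℕ → GConj B → Prop) (Δ2 : ℕ → GConj A → Prop) :
    ℕ → Set (ℕ × A) × Set (ℕ × B)
  | 0 => (Set.univ, Set.univ)
  | n + 1 =>
    (Dstep u1 Δ1 (DeltaRat u1 u2 Δ1 Δ2 n).1 (DeltaRat u1 u2 Δ1 Δ2 n).2,
     Dstep u2 Δ2 (DeltaRat u1 u2 Δ1 Δ2 n).2 (DeltaRat u1 u2 Δ1 Δ2 n).1)

/-- Belief restrictions for downward rationalizability: (K1) and (K2). -/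
def DownR {B : Type} [Fintype B] (q : B → ℝ) : ℕ → GConj B → Prop :=
  fun k μ => K1 q μ ∧ K2 k μ

/-- Belief restrictions for L-rationalizability: (K1), (K2) and (KL). -/
def LR {B : Type} [Fintype B] (q : B → ℝ) : ℕ → GConj B → Prop :=
  fun k μ => K1 q μ ∧ K2 k μ ∧ KL k μ

/-- Belief restrictions for C-rationalizability: (K1), (K2) and (KC). -/
def CR {B : Type} [Fintype B] (q : B → ℝ) (f : ℕ → ℝ) : ℕ → GConj B → Prop :=
  fun k μ => K1 q μ ∧ K2 k μ ∧ KC f k μ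

section Sets

variable {A B : Type} [Fintype A] [Fintype B]

/-- `n`-downward-rationalizable actions of player 1's type `θ_{1,k}`. -/
def DSet (u1 : A → B → ℝ) (u2 : B → A → ℝ) (p1 : A → ℝ) (p2 : B → ℝ) (n k : ℕ) : Set A :=
  {a | (k, a) ∈ (DeltaRat u1 u2 (DownR p2) (DownR p1) n).1}

/-- `n`-downward-rationalizable actions of player 2's type `θ_{2,k}`. -/
def DSet2 (u1 : A → B → ℝ) (u2 : B → A → ℝ) (p1 : A → ℝ) (p2 : B → ℝ) (n k : ℕ) : Set B :=
  {b | (k, b) ∈ (DeltaRat u1 u2 (DownR p2) (DownR p1) n).2}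

def DSetInf (u1 : A → B → ℝ) (u2 : B → A → ℝ) (p1 : A → ℝ) (p2 : B → ℝ) (k : ℕ) : Set A :=
  ⋂ n, DSet u1 u2 p1 p2 n k

def DSet2Inf (u1 : A → B → ℝ) (u2 : B → A → ℝ) (p1 : A → ℝ) (p2 : B → ℝ) (k : ℕ) : Set B :=
  ⋂ n, DSet2 u1 u2 p1 p2 n k

/-- `n`-L-rationalizable actions of player 1's type `θ_{1,k}`. -/
def LSet (u1 : A → B → ℝ) (u2 : B → A → ℝ) (p1 : A → ℝ) (p2 : B → ℝ) (n k : ℕ) : Set A :=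
  {a | (k, a) ∈ (DeltaRat u1 u2 (LR p2) (LR p1) n).1}

/-- `n`-L-rationalizable actions of player 2's type `θ_{2,k}`. -/
def LSet2 (u1 : A → B → ℝ) (u2 : B → A → ℝ) (p1 : A → ℝ) (p2 : B → ℝ) (n k : ℕ) : Set B :=
  {b | (k, b) ∈ (DeltaRat u1 u2 (LR p2) (LR p1) n).2}

def LSetInf (u1 : A → B → ℝ) (u2 : B → A → ℝ) (p1 : A → ℝ) (p2 : B → ℝ) (k : ℕ) : Set A :=
  ⋂ n, LSet u1 u2 p1 p2 n k

def LSet2Inf (u1 : A → B → ℝ) (u2 : B → A → ℝ) (p1 : A → ℝ) (p2 : B → ℝ) (k : ℕ) : Set B :=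
  ⋂ n, LSet2 u1 u2 p1 p2 n k

/-- `n`-C-rationalizable actions of player 1's type `θ_{1,k}`. -/
def CSet (u1 : A → B → ℝ) (u2 : B → A → ℝ) (p1 : A → ℝ) (p2 : B → ℝ) (f : ℕ → ℝ)
    (n k : ℕ) : Set A :=
  {a | (k, a) ∈ (DeltaRat u1 u2 (CR p2 f) (CR p1 f) n).1}

/-- `n`-C-rationalizable actions of player 2's type `θ_{2,k}`. -/
def CSet2 (u1 : A → B → ℝ) (u2 : B → A → ℝ) (p1 : A → ℝ) (p2 : B → ℝ) (f : ℕ → ℝ)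
    (n k : ℕ) : Set B :=
  {b | (k, b) ∈ (DeltaRat u1 u2 (CR p2 f) (CR p1 f) n).2}

/-- The Cognitive Hierarchy solution: `CHsol … k` is CH level-`k` behavior (`k ≥ 1`). -/
def CHsol (u1 : A → B → ℝ) (u2 : B → A → ℝ) (p1 : A → ℝ) (p2 : B → ℝ) (f : ℕ → ℝ) :
    ℕ → Set A × Set B
  | 0 => (Set.univ, Set.univ)
  | 1 => ({a | isBR u1 p2 a}, {b | isBR u2 p1 b})
  | k + 2 =>
    ({a | ∃ μ : GConj B, K2 (k + 2) μ ∧ KC f (k + 2) μ ∧ K1 p2 μ ∧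
        (∀ t, 0 < t → ∀ _ : t < k + 2, ∀ b, μ.m t ≠ 0 → μ.cond t b ≠ 0 →
          b ∈ (CHsol u1 u2 p1 p2 f t).2) ∧
        isBR u1 (margAct μ) a},
     {b | ∃ μ : GConj A, K2 (k + 2) μ ∧ KC f (k + 2) μ ∧ K1 p1 μ ∧
        (∀ t, 0 < t → ∀ _ : t < k + 2, ∀ a, μ.m t ≠ 0 → μ.cond t a ≠ 0 →
          a ∈ (CHsol u1 u2 p1 p2 f t).1) ∧
        isBR u2 (margAct μ) b})
  termination_by k => k

end Sets

section MyHelpers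

variable {A B : Type} [Fintype A] [Fintype B]

lemma my_margAct_isDist (μ : GConj B) : IsDist (margAct μ) := by
  constructor
  · intro b
    exact Finset.sum_nonneg fun t _ => mul_nonneg (μ.m_nonneg t) ((μ.cond_dist t).1 b)
  · have : ∑ b, margAct μ b
        = ∑ t ∈ μ.m.support, ∑ b, μ.m t * μ.cond t b := by
      unfold margAct Finsupp.sum
      rw [Finset.sum_comm]
    rw [this]
    have h2 : ∀ t ∈ μ.m.support, ∑ b, μ.m t * μ.cond t b = μ.m t := by
      intro t _
      rw [← Finset.mul_sum, (μ.cond_dist t).2, mul_one]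
    rw [Finset.sum_congr rfl h2]
    exact μ.m_sum

lemma my_margAct_support (μ : GConj B) (b : B) (h : margAct μ b ≠ 0) :
    ∃ t, μ.m t ≠ 0 ∧ μ.cond t b ≠ 0 := by
  by_contra hc
  push_neg at hc
  apply h
  unfold margAct Finsupp.sum
  refine Finset.sum_eq_zero fun t _ => ?_
  rcases eq_or_ne (μ.m t) 0 with h0 | h0
  · simp [h0]
  · simp [hc t h0]

lemma my_Lstep1 (u1 : A → B → ℝ) (u2 : B → A → ℝ) :
    Lstep u1 (⋂ n, (Rseq u1 u2 n).2) ⊆ ⋂ n, (Rseq u1 u2 n).1 := by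
  intro a ha
  obtain ⟨ν, hν, hsupp, hbr⟩ := ha
  rw [Set.mem_iInter]
  intro n
  induction n with
  | zero => exact Set.mem_univ a
  | succ n ih =>
    exact ⟨ih, ν, hν, fun b hb => Set.mem_iInter.mp (hsupp b hb) n, hbr⟩

lemma my_Lstep2 (u1 : A → B → ℝ) (u2 : B → A → ℝ) :
    Lstep u2 (⋂ n, (Rseq u1 u2 n).1) ⊆ ⋂ n, (Rseq u1 u2 n).2 := by
  intro b hb
  obtain ⟨ν, hν, hsupp, hbr⟩ := hb
  rw [Set.mem_iInter]
  intro n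
  induction n with
  | zero => exact Set.mem_univ b
  | succ n ih =>
    exact ⟨ih, ν, hν, fun a ha => Set.mem_iInter.mp (hsupp a ha) n, hbr⟩

lemma my_main (u1 : A → B → ℝ) (u2 : B → A → ℝ) (p1 : A → ℝ) (p2 : B → ℝ)
    (f : ℕ → ℝ)
    (hanc1 : ∀ a, p1 a ≠ 0 → ∀ n, a ∈ (Rseq u1 u2 n).1)
    (hanc2 : ∀ b, p2 b ≠ 0 → ∀ n, b ∈ (Rseq u1 u2 n).2) :
    ∀ n : ℕ,
      (∀ k, 1 ≤ k → k ≤ n → CSet u1 u2 p1 p2 f n k ⊆ ⋂ m, (Rseq u1 u2 m).1) ∧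
      (∀ k, 1 ≤ k → k ≤ n → CSet2 u1 u2 p1 p2 f n k ⊆ ⋂ m, (Rseq u1 u2 m).2) := by
  intro n
  induction n with
  | zero =>
    exact ⟨fun k hk hk0 => absurd (le_trans hk hk0) (by norm_num),
           fun k hk hk0 => absurd (le_trans hk hk0) (by norm_num)⟩
  | succ n ih =>
    obtain ⟨ih1, ih2⟩ := ih
    constructor
    · intro k hk hkn a ha
      obtain ⟨_, hor⟩ := ha
      rcases hor with h0 | ⟨μ, ⟨hK1, hK2, _⟩, hsupp, hbr⟩
      · exact absurd h0 (Nat.one_le_iff_ne_zero.mp hk)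
      refine my_Lstep1 u1 u2 ⟨margAct μ, my_margAct_isDist μ, ?_, hbr⟩
      intro b hb
      obtain ⟨t, hmt, hct⟩ := my_margAct_support μ b hb
      have htk : t < k := hK2 t hmt
      match t, hmt, hct, htk with
      | 0, hmt, hct, _ =>
        rw [hK1 hmt] at hct
        exact Set.mem_iInter.mpr (hanc2 b hct)
      | t + 1, hmt, hct, htk =>
        have hb2 : b ∈ CSet2 u1 u2 p1 p2 f n (t + 1) := hsupp (t + 1) b hmt hct
        exact ih2 (t + 1) (Nat.succ_le_succ (Nat.zero_le t))
          (Nat.lt_succ_iff.mp (lt_of_lt_of_le htk hkn)) hb2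
    · intro k hk hkn b hb
      obtain ⟨_, hor⟩ := hb
      rcases hor with h0 | ⟨μ, ⟨hK1, hK2, _⟩, hsupp, hbr⟩
      · exact absurd h0 (Nat.one_le_iff_ne_zero.mp hk)
      refine my_Lstep2 u1 u2 ⟨margAct μ, my_margAct_isDist μ, ?_, hbr⟩
      intro a ha
      obtain ⟨t, hmt, hct⟩ := my_margAct_support μ a ha
      have htk : t < k := hK2 t hmt
      match t, hmt, hct, htk with
      | 0, hmt, hct, _ =>
        rw [hK1 hmt] at hct
        exact Set.mem_iInter.mpr (hanc1 a hct)
      | t + 1, hmt, hct, htk =>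
        have ha2 : a ∈ CSet u1 u2 p1 p2 f n (t + 1) := hsupp (t + 1) a hmt hct
        exact ih1 (t + 1) (Nat.succ_le_succ (Nat.zero_le t))
          (Nat.lt_succ_iff.mp (lt_of_lt_of_le htk hkn)) ha2

end MyHelpers

/-- if the anchor is supported on the rationalizable actions, then for
every order `n` some level is consistent; in fact for every `k ≥ 1` the
`k`-C-rationalizable actions of `θ_{i,k}` are rationalizable (hence `k`-rationalizable). -/
theorem C_consistency_rationalizable_anchor {A B : Type} [Fintype A] [Fintype B]
    (u1 : A → B → ℝ) (u2 : B → A → ℝ) (p1 : A → ℝ) (p2 : B → ℝ)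
    (hp1 : IsDist p1) (hp2 : IsDist p2) (f : ℕ → ℝ) (hf : FullDist f)
    (hanc1 : ∀ a, p1 a ≠ 0 → ∀ n, a ∈ (Rseq u1 u2 n).1)
    (hanc2 : ∀ b, p2 b ≠ 0 → ∀ n, b ∈ (Rseq u1 u2 n).2) :
    ((∀ n : ℕ, ∃ k : ℕ, CSet u1 u2 p1 p2 f n k ⊆ (Rseq u1 u2 n).1) ∧
     (∀ k : ℕ, 1 ≤ k →
        CSet u1 u2 p1 p2 f k k ⊆ (⋂ n, (Rseq u1 u2 n).1) ∧
        (⋂ n, (Rseq u1 u2 n).1) ⊆ (Rseq u1 u2 k).1)) ∧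
    ((∀ n : ℕ, ∃ k : ℕ, CSet2 u1 u2 p1 p2 f n k ⊆ (Rseq u1 u2 n).2) ∧
     (∀ k : ℕ, 1 ≤ k →
        CSet2 u1 u2 p1 p2 f k k ⊆ (⋂ n, (Rseq u1 u2 n).2) ∧
        (⋂ n, (Rseq u1 u2 n).2) ⊆ (Rseq u1 u2 k).2)) := by
  constructor
  · constructor
    · intro n
      match n with
      | 0 => exact ⟨1, fun a _ => Set.mem_univ a⟩
      | n + 1 =>
        refine ⟨n + 1, fun a ha => ?_⟩
        have := (my_main u1 u2 p1 p2 f hanc1 hanc2 (n + 1)).1 (n + 1)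
          (Nat.succ_le_succ (Nat.zero_le n)) le_rfl ha
        exact Set.mem_iInter.mp this (n + 1)
    · intro k hk
      exact ⟨(my_main u1 u2 p1 p2 f hanc1 hanc2 k).1 k hk le_rfl,
        Set.iInter_subset _ k⟩
  · constructor
    · intro n
      match n with
      | 0 => exact ⟨1, fun b _ => Set.mem_univ b⟩
      | n + 1 =>
        refine ⟨n + 1, fun b hb => ?_⟩
        have := (my_main u1 u2 p1 p2 f hanc1 hanc2 (n + 1)).2 (n + 1)
          (Nat.succ_le_succ (Nat.zero_le n)) le_rfl hb
        exact Set.mem_iInter.mp this (n + 1)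
    · intro k hk
      exact ⟨(my_main u1 u2 p1 p2 f hanc1 hanc2 k).2 k hk le_rfl,
        Set.iInter_subset _ k⟩
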